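/- arXiv:1709.08033 — 2 statements merged into one kernel-verified Lean document; each statement's English description precedes it below -/
import Mathlib

section
/- Let G be a finite abelian group and H ≤ G a subgroup. Then D(G) ≤ exp(G/H)·(D(H) − 1) + η(G/H). -/
open Multiset Finset Filter

/-- The Davenport constant: smallest `t ≥ 1` such that every multiset of `t` or more
elements of `G` has a non-empty zero-sum sub-multiset. -/
noncomputable def DavCon (G : Type*) [AddCommGroup G] : ℕ :=
  sInf {t : ℕ | 1 ≤ t ∧ ∀ S : Multiset G, t ≤ Multiset.card S →
    ∃ T, T ≤ S ∧ T ≠ 0 ∧ T.sum = 0}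

/-- The η-invariant: smallest `t ≥ 1` such that every multiset of `t` or more elements of `G`
has a non-empty zero-sum sub-multiset of length at most `exp G`. -/
noncomputable def EtaCon (G : Type*) [AddCommGroup G] : ℕ :=
  sInf {t : ℕ | 1 ≤ t ∧ ∀ S : Multiset G, t ≤ Multiset.card S →
    ∃ T, T ≤ S ∧ T ≠ 0 ∧ Multiset.card T ≤ AddMonoid.exponent G ∧ T.sum = 0}

/-- `maxPP n` is the greatest prime power dividing `n`, with `maxPP 1 = 1`. -/
def maxPP (n : ℕ) : ℕ := ((n.divisors).filter IsPrimePow).max.unbotD 1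

section Aux

variable {α β : Type*}

/-- Lift a sub-multiset of a mapped multiset. -/
lemma aux_exists_map_le {f : α → β} :
    ∀ (T' : Multiset β) (S : Multiset α), T' ≤ S.map f → ∃ T, T ≤ S ∧ T.map f = T' := by
  classical
  intro T'
  induction T' using Multiset.induction with
  | empty => exact fun S _ => ⟨0, Multiset.zero_le S, rfl⟩
  | cons a T' ih =>
    intro S h
    have ha : a ∈ S.map f := mem_of_le h (mem_cons_self a T')
    obtain ⟨x, hxS, hfx⟩ := mem_map.mp ha
    obtain ⟨S', rfl⟩ := exists_cons_of_mem hxS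
    have h2 : T' ≤ S'.map f := by
      have h3 := Multiset.erase_le_erase a h
      rwa [Multiset.erase_cons_head, Multiset.map_cons, ← hfx,
        Multiset.erase_cons_head] at h3
    obtain ⟨T, hT, rfl⟩ := ih S' h2
    exact ⟨x ::ₘ T, cons_le_cons x hT, by rw [Multiset.map_cons, hfx]⟩

lemma aux_sum_le_sum {A : Type*} {s t : Multiset (Multiset A)} (h : s ≤ t) :
    s.sum ≤ t.sum := by
  obtain ⟨u, rfl⟩ := Multiset.le_iff_exists_add.mp h
  rw [Multiset.sum_add]
  exact Multiset.le_add_right _ _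

lemma aux_sum_sum {A : Type*} [AddCommMonoid A] (m : Multiset (Multiset A)) :
    m.sum.sum = (m.map Multiset.sum).sum := by
  induction m using Multiset.induction with
  | empty => simp
  | cons a m ih => simp [ih]

/-- A zero-sum segment from equal partial sums. -/
lemma dav_mem_aux {K : Type*} [AddCommGroup K] {l : List K} {S : Multiset K}
    (hl : (l : Multiset K) = S) {i j : ℕ} (hj : j ≤ l.length) (hlt : i < j)
    (hij : (l.take i).sum = (l.take j).sum) :
    ∃ T, T ≤ S ∧ T ≠ 0 ∧ T.sum = 0 := by
  set t := (l.take j).drop i with ht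
  have hsplit : l.take i ++ t = l.take j := by
    have h := List.take_append_drop i (l.take j)
    rwa [List.take_take, min_eq_left hlt.le] at h
  have hsum : t.sum = 0 := by
    have h2 : (l.take i).sum + t.sum = (l.take i).sum + 0 := by
      rw [add_zero, ← List.sum_append, hsplit, ← hij]
    exact add_left_cancel h2
  have hlent : t.length = j - i := by
    rw [ht, List.length_drop, List.length_take]
    omega
  have hsub : t.Sublist l :=
    ((List.drop_suffix i (l.take j)).sublist).trans ((List.take_prefix j l).sublist)
  refine ⟨(t : Multiset K), ?_, ?_, ?_⟩
  · rw [← hl]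
    exact Multiset.coe_le.mpr hsub.subperm
  · rw [ne_eq, Multiset.coe_eq_zero]
    intro h
    rw [h] at hlent
    simp at hlent
    omega
  · rw [Multiset.sum_coe]
    exact hsum

/-- The Davenport set is inhabited by `|K|` (partial-sum pigeonhole). -/
lemma dav_mem (K : Type*) [AddCommGroup K] [Fintype K] :
    (Fintype.card K) ∈ {t : ℕ | 1 ≤ t ∧ ∀ S : Multiset K, t ≤ Multiset.card S →
      ∃ T, T ≤ S ∧ T ≠ 0 ∧ T.sum = 0} := by
  classical
  refine ⟨Fintype.card_pos, fun S hS => ?_⟩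
  set l := S.toList with hl
  have hlS : (l : Multiset K) = S := by rw [hl, Multiset.coe_toList]
  have hlen : Fintype.card K ≤ l.length := by
    rw [hl, Multiset.length_toList]; exact hS
  have hcard : Fintype.card K < Fintype.card (Fin (l.length + 1)) := by
    simp; omega
  obtain ⟨i, j, hne, hij⟩ := Fintype.exists_ne_map_eq_of_card_lt
    (fun i : Fin (l.length + 1) => (l.take i).sum) hcard
  have hne' : (i : ℕ) ≠ (j : ℕ) := fun h => hne (Fin.ext h)
  have hi : (i : ℕ) ≤ l.length := by omega
  have hj : (j : ℕ) ≤ l.length := by omega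
  rcases lt_or_gt_of_ne hne' with hlt | hlt
  · exact dav_mem_aux hlS hj hlt hij
  · exact dav_mem_aux hlS hi hlt hij.symm

/-- The η set is inhabited. -/
lemma eta_mem (K : Type*) [AddCommGroup K] [Fintype K] :
    (Fintype.card K * (AddMonoid.exponent K - 1) + 1) ∈
      {t : ℕ | 1 ≤ t ∧ ∀ S : Multiset K, t ≤ Multiset.card S →
        ∃ T, T ≤ S ∧ T ≠ 0 ∧ Multiset.card T ≤ AddMonoid.exponent K ∧ T.sum = 0} := by
  classical
  refine ⟨Nat.le_add_left 1 _, fun S hS => ?_⟩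
  by_cases hex : ∃ g : K, addOrderOf g ≤ S.count g
  · obtain ⟨g, hg⟩ := hex
    refine ⟨Multiset.replicate (addOrderOf g) g, ?_, ?_, ?_, ?_⟩
    · exact Multiset.le_count_iff_replicate_le.mp hg
    · intro h
      have hc := congrArg Multiset.card h
      rw [Multiset.card_replicate, Multiset.card_zero] at hc
      exact (addOrderOf_pos g).ne' hc
    · rw [Multiset.card_replicate]
      exact AddMonoid.addOrderOf_le_exponent (AddMonoid.ExponentExists.of_finite) g
    · rw [Multiset.sum_replicate]
      exact addOrderOf_nsmul_eq_zero g
  · push_neg at hex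
    exfalso
    have hbound : Multiset.card S ≤ Fintype.card K * (AddMonoid.exponent K - 1) := by
      calc Multiset.card S = ∑ g ∈ S.toFinset, S.count g :=
            (Multiset.toFinset_sum_count_eq S).symm
        _ ≤ ∑ _g ∈ S.toFinset, (AddMonoid.exponent K - 1) := by
            refine Finset.sum_le_sum fun g _ => ?_
            have h1 := hex g
            have h2 : addOrderOf g ≤ AddMonoid.exponent K :=
              AddMonoid.addOrderOf_le_exponent (AddMonoid.ExponentExists.of_finite) g
            omega
        _ = S.toFinset.card * (AddMonoid.exponent K - 1) := by
            rw [Finset.sum_const, smul_eq_mul]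
        _ ≤ Fintype.card K * (AddMonoid.exponent K - 1) :=
            Nat.mul_le_mul_right _ (Finset.card_le_univ _)
    omega

/-- Repeated extraction of short zero-sum (mod kernel) subsequences. -/
lemma extract {G K : Type*} [AddCommGroup G] [AddCommGroup K] (π : G →+ K) (e η : ℕ)
    (hη : ∀ S : Multiset K, η ≤ Multiset.card S →
      ∃ T, T ≤ S ∧ T ≠ 0 ∧ Multiset.card T ≤ e ∧ T.sum = 0) :
    ∀ (k : ℕ) (S : Multiset G), e * k + η ≤ Multiset.card S →
      ∃ L : List (Multiset G), L.length = k + 1 ∧ L.sum ≤ S ∧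
        ∀ T ∈ L, T ≠ 0 ∧ Multiset.card T ≤ e ∧ π T.sum = 0 := by
  classical
  intro k
  induction k with
  | zero =>
    intro S hS
    obtain ⟨T', hT'S, hT'0, hT'card, hT'sum⟩ := hη (S.map π)
      (by rw [Multiset.card_map]; omega)
    obtain ⟨T, hTS, rfl⟩ := aux_exists_map_le T' S hT'S
    refine ⟨[T], rfl, by simpa using hTS, fun U hU => ?_⟩
    rcases List.mem_singleton.mp hU with rfl
    refine ⟨fun h0 => hT'0 (by simp [h0]), ?_, ?_⟩
    · rwa [Multiset.card_map] at hT'card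
    · exact (map_multiset_sum π U).trans hT'sum
  | succ k ih =>
    intro S hS
    rw [Nat.mul_succ] at hS
    obtain ⟨T', hT'S, hT'0, hT'card, hT'sum⟩ := hη (S.map π)
      (by rw [Multiset.card_map]; omega)
    obtain ⟨T, hTS, rfl⟩ := aux_exists_map_le T' S hT'S
    have hTcard : Multiset.card T ≤ e := by rwa [Multiset.card_map] at hT'card
    obtain ⟨L, hLlen, hLsum, hLall⟩ := ih (S - T) (by
      rw [Multiset.card_sub hTS]
      omega)
    refine ⟨T :: L, by simp [hLlen], ?_, ?_⟩
    · rw [List.sum_cons]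
      calc T + L.sum ≤ T + (S - T) := add_le_add_right hLsum T
        _ = S := add_tsub_cancel_of_le hTS
    · intro U hU
      rcases List.mem_cons.mp hU with rfl | hU
      · exact ⟨fun h0 => hT'0 (by simp [h0]), hTcard,
          (map_multiset_sum π U).trans hT'sum⟩
      · exact hLall U hU

end Aux

/-- the inductive method bound. -/
theorem stmt_6 (G : Type*) [AddCommGroup G] [Fintype G] (H : AddSubgroup G) :
    DavCon G ≤ AddMonoid.exponent (G ⧸ H) * (DavCon H - 1) + EtaCon (G ⧸ H) := by
  classical
  set K := G ⧸ H with hK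
  haveI : Fintype K := Fintype.ofFinite _
  haveI : Fintype H := Fintype.ofFinite _
  set e := AddMonoid.exponent K with he
  have hEta : 1 ≤ EtaCon K ∧ ∀ S : Multiset K, EtaCon K ≤ Multiset.card S →
      ∃ T, T ≤ S ∧ T ≠ 0 ∧ Multiset.card T ≤ e ∧ T.sum = 0 :=
    Nat.sInf_mem ⟨_, eta_mem K⟩
  have hDav : 1 ≤ DavCon H ∧ ∀ S : Multiset H, DavCon H ≤ Multiset.card S →
      ∃ T, T ≤ S ∧ T ≠ 0 ∧ T.sum = 0 :=
    Nat.sInf_mem ⟨_, dav_mem H⟩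
  apply Nat.sInf_le
  refine ⟨le_trans hEta.1 (Nat.le_add_left _ _), fun S hS => ?_⟩
  set π := QuotientAddGroup.mk' H with hπ
  obtain ⟨L, hLlen, hLsum, hLall⟩ := extract π e (EtaCon K) hEta.2 (DavCon H - 1) S hS
  have hLmem : ∀ T ∈ (L : Multiset (Multiset G)), T.sum ∈ H := by
    intro T hT
    rw [Multiset.mem_coe] at hT
    have h := (hLall T hT).2.2
    rwa [hπ, QuotientAddGroup.mk'_apply, QuotientAddGroup.eq_zero_iff] at h
  set M : Multiset H :=
    (L : Multiset (Multiset G)).pmap (fun (T : Multiset G) (hT : T.sum ∈ H) => (⟨T.sum, hT⟩ : H)) hLmem with hM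
  have hMcard : DavCon H ≤ Multiset.card M := by
    rw [hM, Multiset.card_pmap, Multiset.coe_card, hLlen]
    omega
  obtain ⟨N, hNM, hN0, hNsum⟩ := hDav.2 M hMcard
  rw [hM, Multiset.pmap_eq_map_attach] at hNM
  obtain ⟨N', hN'le, hN'map⟩ := aux_exists_map_le N _ hNM
  refine ⟨(N'.map Subtype.val).sum, ?_, ?_, ?_⟩
  · -- it is a sub-multiset of S
    have h1 : N'.map Subtype.val ≤ (L : Multiset (Multiset G)) := by
      have h := Multiset.map_le_map (f := Subtype.val) hN'le
      rwa [Multiset.attach_map_val] at h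
    calc (N'.map Subtype.val).sum ≤ (L : Multiset (Multiset G)).sum := aux_sum_le_sum h1
      _ = L.sum := Multiset.sum_coe L
      _ ≤ S := hLsum
  · -- it is non-empty
    have hN'0 : N' ≠ 0 := by
      rintro rfl
      exact hN0 (by rw [← hN'map]; simp)
    obtain ⟨x, hx⟩ := Multiset.exists_mem_of_ne_zero hN'0
    have hxL : x.1 ∈ L := by
      have h2 : x.1 ∈ ((L : Multiset (Multiset G)).attach.map Subtype.val) :=
        Multiset.mem_map_of_mem _ (Multiset.mem_attach _ x)
      rw [Multiset.attach_map_val, Multiset.mem_coe] at h2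
      exact h2
    have hx1 : x.1 ≠ 0 := (hLall x.1 hxL).1
    intro hzero
    exact hx1 (Multiset.sum_eq_zero_iff.mp hzero _ (Multiset.mem_map_of_mem _ hx))
  · -- it has zero sum
    have h3 : (N'.map Subtype.val).sum.sum
        = ((N'.map Subtype.val).map Multiset.sum).sum := aux_sum_sum _
    rw [h3]
    have h4 : (N'.map Subtype.val).map Multiset.sum
        = N.map (Subtype.val : H → G) := by
      rw [← hN'map, Multiset.map_map, Multiset.map_map]
      rfl
    rw [h4, ← AddSubmonoidClass.coe_multiset_sum, hNsum]
    rfl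
end

section
/- For every prime p and integers α, r ≥ 1, n_1 ∣ ⋯ ∣ n_r powers of p with n_i > 1: D(C_{n_1} ⊕ ⋯ ⊕ C_{n_r}) = ∑_{i=1}^r (n_i − 1) + 1 (Olson's theorem for p-groups), and in particular D(C_{p^α}^r) = r(p^α − 1) + 1. -/
open Multiset Finset Filter
open scoped Pointwise

section OlsonAux

variable {k : Type*} [CommRing k] {Γ : Type*} [AddCommGroup Γ]

/-- The Olson product `∏_{g ∈ M} (1 - x^g)` in the group algebra. -/
noncomputable def olsonPoly (M : Multiset Γ) : AddMonoidAlgebra k Γ :=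
  (M.map fun g => 1 - AddMonoidAlgebra.single g 1).prod

lemma olsonPoly_cons_apply (g : Γ) (M : Multiset Γ) (x : Γ) :
    (olsonPoly (k := k) (g ::ₘ M)).coeff x
      = (olsonPoly (k := k) M).coeff x - (olsonPoly (k := k) M).coeff (-g + x) := by
  have h : olsonPoly (k := k) (g ::ₘ M)
      = olsonPoly (k := k) M - AddMonoidAlgebra.single g 1 * olsonPoly (k := k) M := by
    simp only [olsonPoly, Multiset.map_cons, Multiset.prod_cons]; ring
  rw [h, AddMonoidAlgebra.coeff_sub, Finsupp.sub_apply, AddMonoidAlgebra.coeff_single_mul_apply, one_mul]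

lemma olsonPoly_support (M : Multiset Γ) :
    ∀ x : Γ, (olsonPoly (k := k) M).coeff x ≠ 0 → ∃ T, T ≤ M ∧ T.sum = x := by
  classical
  induction M using Multiset.induction with
  | empty =>
    intro x hx
    have h1 : (olsonPoly (k := k) (0 : Multiset Γ)) = 1 := by simp [olsonPoly]
    rw [h1, AddMonoidAlgebra.one_def, AddMonoidAlgebra.coeff_single, Finsupp.single_apply] at hx
    refine ⟨0, le_refl _, ?_⟩
    rw [Multiset.sum_zero]
    by_contra h
    rw [if_neg h] at hx
    exact hx rfl
  | cons g M ih =>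
    intro x hx
    rw [olsonPoly_cons_apply] at hx
    by_cases h1 : (olsonPoly (k := k) M).coeff x ≠ 0
    · obtain ⟨T, hT, hs⟩ := ih x h1
      exact ⟨T, hT.trans (Multiset.le_cons_self _ _), hs⟩
    · push_neg at h1
      have h2 : (olsonPoly (k := k) M).coeff (-g + x) ≠ 0 := by
        intro h; rw [h1, h, sub_zero] at hx; exact hx rfl
      obtain ⟨T, hT, hs⟩ := ih _ h2
      refine ⟨g ::ₘ T, Multiset.cons_le_cons g hT, ?_⟩
      rw [Multiset.sum_cons, hs, add_neg_cancel_left]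

lemma olsonPoly_coeff_zero (M : Multiset Γ)
    (h : ∀ T, T ≤ M → T ≠ 0 → T.sum ≠ 0) :
    (olsonPoly (k := k) M).coeff 0 = 1 := by
  classical
  induction M using Multiset.induction with
  | empty =>
    have h1 : (olsonPoly (k := k) (0 : Multiset Γ)) = 1 := by simp [olsonPoly]
    rw [h1, AddMonoidAlgebra.one_def, AddMonoidAlgebra.coeff_single, Finsupp.single_apply, if_pos rfl]
  | cons g M ih =>
    have hM : ∀ T, T ≤ M → T ≠ 0 → T.sum ≠ 0 := fun T hT =>
      h T (hT.trans (Multiset.le_cons_self _ _))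
    have hg : (olsonPoly (k := k) M).coeff (-g) = 0 := by
      by_contra hne
      obtain ⟨T, hT, hs⟩ := olsonPoly_support M _ hne
      refine h (g ::ₘ T) (Multiset.cons_le_cons g hT) (Multiset.cons_ne_zero) ?_
      rw [Multiset.sum_cons, hs, add_neg_cancel]
    rw [olsonPoly_cons_apply, add_zero, ih hM, hg, sub_zero]

lemma multiset_prod_mem_pow {R : Type*} [CommRing R] (I : Ideal R) (M : Multiset R)
    (h : ∀ x ∈ M, x ∈ I) : M.prod ∈ I ^ (Multiset.card M) := by
  induction M using Multiset.induction with
  | empty => simpa using Submodule.mem_top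
  | cons a M ih =>
    rw [Multiset.prod_cons, Multiset.card_cons, pow_succ']
    exact Ideal.mul_mem_mul (h a (Multiset.mem_cons_self a M))
      (ih fun x hx => h x (Multiset.mem_cons_of_mem hx))

end OlsonAux

theorem olson_pGroup (p : ℕ) (hp : p.Prime) (r : ℕ)
    (n : Fin r → ℕ) (hn : ∀ i, ∃ k : ℕ, 1 ≤ k ∧ n i = p ^ k) :
    DavCon ((i : Fin r) → ZMod (n i)) = (∑ i, (n i - 1)) + 1 := by
  classical
  haveI : Fact p.Prime := ⟨hp⟩
  have hn2 : ∀ i, 2 ≤ n i := by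
    intro i
    obtain ⟨κ, hκ, hκ2⟩ := hn i
    rw [hκ2]
    exact Nat.one_lt_pow (by omega) hp.one_lt
  haveI hNZ : ∀ i, NeZero (n i) := fun i => ⟨by have := hn2 i; omega⟩
  haveI hNT : ∀ i, Nontrivial (ZMod (n i)) := fun i =>
    ZMod.nontrivial_iff.mpr (by have := hn2 i; omega)
  set e : Fin r → ((i : Fin r) → ZMod (n i)) := fun i => Pi.single i 1 with he
  have he_inj : Function.Injective e := by
    intro i j hij
    by_contra hne
    have h1 := congrFun hij i
    simp only [he] at h1
    rw [Pi.single_eq_same, Pi.single_eq_of_ne hne 1] at h1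
    exact one_ne_zero h1
  set d := ∑ i, (n i - 1) with hd
  haveI : CharP (AddMonoidAlgebra (ZMod p) ((i : Fin r) → ZMod (n i))) p :=
    charP_of_injective_ringHom (f := AddMonoidAlgebra.singleZeroRingHom)
      (fun a b hab => Finsupp.single_injective (0 : (i : Fin r) → ZMod (n i)) (congrArg AddMonoidAlgebra.coeff hab)) p
  set y : Fin r → AddMonoidAlgebra (ZMod p) ((i : Fin r) → ZMod (n i)) := fun i => AddMonoidAlgebra.single (e i) 1 - 1 with hy
  have y_pow : ∀ i, y i ^ (n i) = 0 := by
    intro i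
    obtain ⟨κ, hκ, hκ2⟩ := hn i
    have hsm : (n i) • e i = (0 : (i : Fin r) → ZMod (n i)) := by
      ext j
      simp only [he, Pi.smul_apply, Pi.zero_apply]
      by_cases hji : j = i
      · subst hji
        rw [Pi.single_eq_same, nsmul_eq_mul, mul_one]
        exact_mod_cast ZMod.natCast_self (n j)
      · rw [Pi.single_eq_of_ne hji, smul_zero]
    have h1 : (AddMonoidAlgebra.single (e i) 1 : AddMonoidAlgebra (ZMod p) ((i : Fin r) → ZMod (n i))) ^ (n i) = 1 := by
      rw [AddMonoidAlgebra.single_pow, hsm, one_pow, ← AddMonoidAlgebra.one_def]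
    simp only [hy]
    rw [hκ2, sub_pow_char_pow, ← hκ2, h1, one_pow, sub_self]
  set J : Ideal (AddMonoidAlgebra (ZMod p) ((i : Fin r) → ZMod (n i))) := Ideal.span (Set.range y) with hJ
  have hmul : ∀ a b : AddMonoidAlgebra (ZMod p) ((i : Fin r) → ZMod (n i)), a - 1 ∈ J → b - 1 ∈ J → a * b - 1 ∈ J := by
    intro a b ha hb
    have h : a * b - 1 = (a - 1) * b + (b - 1) := by ring
    rw [h]
    exact J.add_mem (J.mul_mem_right b ha) hb
  have hpow : ∀ (a : AddMonoidAlgebra (ZMod p) ((i : Fin r) → ZMod (n i))) (c : ℕ), a - 1 ∈ J → a ^ c - 1 ∈ J := by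
    intro a c ha
    induction c with
    | zero => simpa using J.zero_mem
    | succ m ih => rw [pow_succ]; exact hmul _ _ ih ha
  have hsingle_mem : ∀ g : (i : Fin r) → ZMod (n i), (AddMonoidAlgebra.single g 1 : AddMonoidAlgebra (ZMod p) ((i : Fin r) → ZMod (n i))) - 1 ∈ J := by
    have key : ∀ (s : Finset (Fin r)) (g : (i : Fin r) → ZMod (n i)),
        (AddMonoidAlgebra.single (∑ i ∈ s, Pi.single i (g i)) 1 : AddMonoidAlgebra (ZMod p) ((i : Fin r) → ZMod (n i))) - 1 ∈ J := by
      intro s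
      induction s using Finset.cons_induction with
      | empty =>
        intro g
        simpa [← AddMonoidAlgebra.one_def] using J.zero_mem
      | cons a s ha ih =>
        intro g
        rw [Finset.sum_cons]
        have hsplit : (AddMonoidAlgebra.single
              (Pi.single a (g a) + ∑ i ∈ s, Pi.single i (g i)) 1 : AddMonoidAlgebra (ZMod p) ((i : Fin r) → ZMod (n i)))
            = AddMonoidAlgebra.single (Pi.single a (g a)) 1
              * AddMonoidAlgebra.single (∑ i ∈ s, Pi.single i (g i)) 1 := by
          rw [AddMonoidAlgebra.single_mul_single, mul_one]
        rw [hsplit]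
        refine hmul _ _ ?_ (ih g)
        have hval : Pi.single a (g a) = ((g a).val) • e a := by
          ext j
          simp only [he, Pi.smul_apply]
          by_cases hja : j = a
          · subst hja
            rw [Pi.single_eq_same, Pi.single_eq_same, nsmul_eq_mul, mul_one,
              ZMod.natCast_val, ZMod.cast_id]
          · rw [Pi.single_eq_of_ne hja, Pi.single_eq_of_ne hja, smul_zero]
        rw [hval]
        have h2 : (AddMonoidAlgebra.single (((g a).val) • e a) 1 : AddMonoidAlgebra (ZMod p) ((i : Fin r) → ZMod (n i)))
            = (AddMonoidAlgebra.single (e a) 1) ^ ((g a).val) := by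
          rw [AddMonoidAlgebra.single_pow, one_pow]
        rw [h2]
        refine hpow _ _ ?_
        have : (AddMonoidAlgebra.single (e a) 1 : AddMonoidAlgebra (ZMod p) ((i : Fin r) → ZMod (n i))) - 1 = y a := by simp only [hy]
        rw [this]
        exact Ideal.subset_span ⟨a, rfl⟩
    intro g
    have h3 := key Finset.univ g
    rwa [Finset.univ_sum_single] at h3
  have hJpow : J ^ (d + 1) = ⊥ := by
    have hspan : J ^ (d + 1) = Ideal.span ((Set.range y) ^ (d + 1)) := by
      rw [hJ]; exact Submodule.span_pow _ _
    rw [hspan, eq_bot_iff, Ideal.span_le]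
    intro a ha
    rw [Set.mem_pow] at ha
    obtain ⟨f, hf⟩ := ha
    choose idx hidx using fun j => (f j).2
    have ha2 : a = ∏ j : Fin (d + 1), y (idx j) := by
      rw [← hf, List.prod_ofFn]
      exact Finset.prod_congr rfl fun j _ => (hidx j).symm
    have hprod : (∏ j : Fin (d + 1), y (idx j)) = 0 := by
      rw [Finset.prod_comp]
      have hex : ∃ b ∈ Finset.univ.image idx,
          n b ≤ (Finset.univ.filter fun j => idx j = b).card := by
        by_contra hcon
        push_neg at hcon
        have hcard := Finset.card_eq_sum_card_image idx (Finset.univ : Finset (Fin (d + 1)))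
        rw [Finset.card_univ, Fintype.card_fin] at hcard
        have hle : ∑ b ∈ Finset.univ.image idx, (Finset.univ.filter fun j => idx j = b).card
            ≤ ∑ b ∈ Finset.univ.image idx, (n b - 1) := by
          refine Finset.sum_le_sum fun b hb => ?_
          have := hcon b hb
          omega
        have hle2 : ∑ b ∈ Finset.univ.image idx, (n b - 1) ≤ d :=
          le_trans (Finset.sum_le_sum_of_subset (Finset.subset_univ _)) (le_of_eq hd.symm)
        omega
      obtain ⟨b, hb, hnb⟩ := hex
      refine Finset.prod_eq_zero hb ?_
      rw [← Nat.add_sub_cancel' hnb, pow_add, y_pow b, zero_mul]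
    rw [ha2, hprod]
    exact Submodule.zero_mem ⊥
  -- upper bound property
  have upper : ∀ M : Multiset ((i : Fin r) → ZMod (n i)), d + 1 ≤ Multiset.card M →
      ∃ T, T ≤ M ∧ T ≠ 0 ∧ T.sum = 0 := by
    intro M hM
    by_contra hcon
    push_neg at hcon
    have h1 : (olsonPoly (k := ZMod p) M).coeff 0 = 1 :=
      olsonPoly_coeff_zero M fun T hT hne => hcon T hT hne
    have h0 : olsonPoly (k := ZMod p) M = 0 := by
      have hmem : olsonPoly (k := ZMod p) M ∈ J ^ (Multiset.card (M.map fun g =>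
          (1 : AddMonoidAlgebra (ZMod p) ((i : Fin r) → ZMod (n i))) - AddMonoidAlgebra.single g 1)) := by
        refine multiset_prod_mem_pow J _ fun x hx => ?_
        rw [Multiset.mem_map] at hx
        obtain ⟨g, _, rfl⟩ := hx
        have h4 : (1 : AddMonoidAlgebra (ZMod p) ((i : Fin r) → ZMod (n i))) - AddMonoidAlgebra.single g 1
            = -(AddMonoidAlgebra.single g 1 - 1) := by ring
        rw [h4]
        exact J.neg_mem (hsingle_mem g)
      rw [Multiset.card_map] at hmem
      have hle : J ^ (Multiset.card M) ≤ J ^ (d + 1) := Ideal.pow_le_pow_right hM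
      have h5 := hle hmem
      rwa [hJpow, Ideal.mem_bot] at h5
    rw [h0] at h1
    simp only [AddMonoidAlgebra.coeff_zero, Finsupp.coe_zero, Pi.zero_apply] at h1
    exact zero_ne_one h1
  -- the extremal multiset
  set S : Multiset ((i : Fin r) → ZMod (n i)) := ∑ i, Multiset.replicate (n i - 1) (e i) with hS
  have cardsum : ∀ (s : Finset (Fin r)) (f : Fin r → Multiset ((i : Fin r) → ZMod (n i))),
      Multiset.card (∑ i ∈ s, f i) = ∑ i ∈ s, Multiset.card (f i) := by
    intro s f
    induction s using Finset.cons_induction with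
    | empty => simp
    | cons a s ha ih => rw [Finset.sum_cons, Finset.sum_cons, Multiset.card_add, ih]
  have hScard : Multiset.card S = d := by
    rw [hS, cardsum, hd]
    exact Finset.sum_congr rfl fun i _ => Multiset.card_replicate _ _
  have hScount : ∀ i, S.count (e i) = n i - 1 := by
    intro i
    rw [hS, Multiset.count_sum']
    have h6 : ∀ j, Multiset.count (e i) (Multiset.replicate (n j - 1) (e j))
        = if i = j then n j - 1 else 0 := by
      intro j
      rw [Multiset.count_replicate]
      congr 1
      simp [he_inj.eq_iff, eq_comm]
    rw [Finset.sum_congr rfl fun j _ => h6 j]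
    simp
  have hSmem : ∀ g ∈ S, ∃ i, g = e i := by
    intro g hg
    rw [hS, Multiset.mem_sum] at hg
    obtain ⟨i, _, hgi⟩ := hg
    exact ⟨i, (Multiset.eq_of_mem_replicate hgi)⟩
  have lower : ∀ T, T ≤ S → T ≠ 0 → T.sum ≠ 0 := by
    intro T hT hne hsum
    obtain ⟨g, hg⟩ := Multiset.exists_mem_of_ne_zero hne
    obtain ⟨j, rfl⟩ := hSmem g (Multiset.mem_of_le hT hg)
    set c := T.count (e j) with hc
    have hc1 : 1 ≤ c := Multiset.one_le_count_iff_mem.mpr hg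
    have hc2 : c ≤ n j - 1 := by
      rw [hc, ← hScount j]
      exact Multiset.count_le_of_le _ hT
    have hsplit : T = Multiset.filter (· = e j) T + Multiset.filter (fun x => ¬ x = e j) T :=
      (Multiset.filter_add_not _ _).symm
    have hfe : Multiset.filter (· = e j) T = Multiset.replicate c (e j) := by
      rw [hc]; exact Multiset.filter_eq' T (e j)
    have hTsumj : T.sum j = (c : ZMod (n j)) := by
      conv_lhs => rw [hsplit]
      rw [Multiset.sum_add, Pi.add_apply, hfe, Multiset.sum_replicate]
      have hz : (Multiset.filter (fun x => ¬ x = e j) T).sum j = 0 := by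
        have hev : (Multiset.filter (fun x => ¬ x = e j) T).sum j
            = ((Multiset.filter (fun x => ¬ x = e j) T).map
                (fun v : (i : Fin r) → ZMod (n i) => v j)).sum :=
          (Pi.evalAddMonoidHom (fun i => ZMod (n i)) j).map_multiset_sum _
        rw [hev]
        have hcoord : ∀ x ∈ Multiset.filter (fun x => ¬ x = e j) T,
            (fun v : (i : Fin r) → ZMod (n i) => v j) x = (fun _ : (i : Fin r) → ZMod (n i) => (0 : ZMod (n j))) x := by
          intro x hx
          rw [Multiset.mem_filter] at hx
          obtain ⟨i, rfl⟩ := hSmem x (Multiset.mem_of_le hT hx.1)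
          have hij : i ≠ j := fun h => hx.2 (by rw [h])
          simp only [he]
          exact Pi.single_eq_of_ne (Ne.symm hij) 1
        rw [Multiset.map_congr rfl hcoord]
        simp
      rw [hz, add_zero, Pi.smul_apply]
      simp only [he]
      rw [Pi.single_eq_same, nsmul_eq_mul, mul_one]
    rw [hsum] at hTsumj
    have h7 : (c : ZMod (n j)) = 0 := hTsumj.symm
    rw [ZMod.natCast_eq_zero_iff] at h7
    have h8 := Nat.le_of_dvd (by omega) h7
    have h9 := hn2 j
    omega
  -- conclude
  rw [DavCon]
  have hmem : (d + 1) ∈ {t : ℕ | 1 ≤ t ∧ ∀ S : Multiset ((i : Fin r) → ZMod (n i)), t ≤ Multiset.card S →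
      ∃ T, T ≤ S ∧ T ≠ 0 ∧ T.sum = 0} := ⟨by omega, upper⟩
  refine le_antisymm (Nat.sInf_le hmem) (le_csInf ⟨_, hmem⟩ ?_)
  rintro t ⟨ht1, ht⟩
  by_contra hlt
  push_neg at hlt
  obtain ⟨T, hTS, hTne, hTsum⟩ := ht S (by omega)
  exact lower T hTS hTne hTsum

/-- Olson's theorem for `p`-groups, and the special case `C_{p^α}^r`. -/
theorem stmt_9 (p : ℕ) (hp : p.Prime) (α r : ℕ) (hα : 1 ≤ α) (hr : 1 ≤ r)
    (n : Fin r → ℕ) (hn : ∀ i, ∃ k : ℕ, 1 ≤ k ∧ n i = p ^ k)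
    (hchain : ∀ i j : Fin r, i ≤ j → n i ∣ n j) :
    DavCon ((i : Fin r) → ZMod (n i)) = (∑ i, (n i - 1)) + 1 ∧
    DavCon (Fin r → ZMod (p ^ α)) = r * (p ^ α - 1) + 1 := by
  constructor
  · exact olson_pGroup p hp r n hn
  · have h := olson_pGroup p hp r (fun _ => p ^ α) (fun _ => ⟨α, hα, rfl⟩)
    simpa [Finset.sum_const, Finset.card_univ, smul_eq_mul] using h
end
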